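/- Suppose real numbers R ≥ r ≥ 0 with t_δ(R) ≤ β < 1/√(-δ) for δ < 0. Then there exists a constant K' > 0 depending only on δ and β such that |c_δ(R) - c_δ(r)| ≤ K'·(t_δ(R)² - t_δ(r)²). -/
import Mathlib

lemma tanh_sq_eq (x : ℝ) : Real.tanh x ^ 2 = 1 - 1 / Real.cosh x ^ 2 := by
  rw [Real.tanh_eq_sinh_div_cosh, div_pow, Real.sinh_sq]
  field_simp [(Real.cosh_pos x).ne']

set_option maxHeartbeats 1000000 in
theorem stmt_13 (δ : ℝ) (hδ : δ < 0) (β : ℝ) (hβ0 : 0 < β)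
    (hβ : β < 1 / Real.sqrt (-δ)) :
    ∃ K : ℝ, 0 < K ∧ ∀ R r : ℝ, 0 ≤ r → r ≤ R →
      Real.tanh (Real.sqrt (-δ) * R) / Real.sqrt (-δ) ≤ β →
      |Real.cosh (Real.sqrt (-δ) * R) - Real.cosh (Real.sqrt (-δ) * r)| ≤
        K * ((Real.tanh (Real.sqrt (-δ) * R) / Real.sqrt (-δ)) ^ 2 -
             (Real.tanh (Real.sqrt (-δ) * r) / Real.sqrt (-δ)) ^ 2) := by
  set s := Real.sqrt (-δ) with hsdef
  have hs : 0 < s := Real.sqrt_pos.mpr (by linarith)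
  have hsβ : s * β < 1 := by
    have := (lt_div_iff₀ hs).mp hβ
    linarith [mul_comm β s]
  set c : ℝ := 1 - (s * β) ^ 2 with hcdef
  have hc : 0 < c := by
    have h1 : 0 < s * β := mul_pos hs hβ0
    nlinarith
  refine ⟨s ^ 2 / c ^ 2, by positivity, ?_⟩
  intro R r hr hrR htβ
  set x := s * R with hx
  set y := s * r with hy
  have hy0 : 0 ≤ y := by positivity
  have hxy : y ≤ x := by
    apply mul_le_mul_of_nonneg_left hrR hs.le
  set a := Real.cosh x with ha
  set b := Real.cosh y with hb
  have ha1 : 1 ≤ a := Real.one_le_cosh x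
  have hb1 : 1 ≤ b := Real.one_le_cosh y
  have hab : b ≤ a := by
    rw [ha, hb, Real.cosh_le_cosh, abs_of_nonneg hy0, abs_of_nonneg (hy0.trans hxy)]
    exact hxy
  have htx : Real.tanh x ^ 2 = 1 - 1 / a ^ 2 := tanh_sq_eq x
  have hty : Real.tanh y ^ 2 = 1 - 1 / b ^ 2 := tanh_sq_eq y
  -- tanh x ≤ s * β and tanh x ≥ 0
  have htx0 : 0 ≤ Real.tanh x := by
    rw [Real.tanh_eq_sinh_div_cosh]
    exact div_nonneg (Real.sinh_nonneg_iff.mpr (hy0.trans hxy)) (Real.cosh_pos x).le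
  have htxb : Real.tanh x ≤ s * β := by
    have := (div_le_iff₀ hs).mp htβ
    linarith [mul_comm β s]
  have hac : a ^ 2 * c ≤ 1 := by
    have h2 : Real.tanh x ^ 2 ≤ (s * β) ^ 2 := by nlinarith
    rw [htx] at h2
    have ha0 : (0:ℝ) < a ^ 2 := by positivity
    rw [hcdef]
    have : 1 / a ^ 2 ≥ 1 - (s * β) ^ 2 := by linarith
    calc a ^ 2 * (1 - (s*β)^2) ≤ a ^ 2 * (1 / a ^ 2) := by
          exact mul_le_mul_of_nonneg_left this ha0.le
      _ = 1 := by field_simp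
  rw [abs_of_nonneg (by linarith)]
  have ha0 : (0:ℝ) < a := by linarith
  have hb0 : (0:ℝ) < b := by linarith
  clear_value b a y x c s
  have key : a - b ≤ s ^ 2 / c ^ 2 * ((1 - 1 / a ^ 2) / s ^ 2 - (1 - 1 / b ^ 2) / s ^ 2) := by
    have heq : s ^ 2 / c ^ 2 * ((1 - 1 / a ^ 2) / s ^ 2 - (1 - 1 / b ^ 2) / s ^ 2)
        = (a ^ 2 - b ^ 2) / (c ^ 2 * (a ^ 2 * b ^ 2)) := by
      field_simp
      ring
    rw [heq, le_div_iff₀ (by positivity)]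
    have hba2 : b ^ 2 ≤ a ^ 2 := by nlinarith
    have hbc : b ^ 2 * c ≤ 1 :=
      le_trans (mul_le_mul_of_nonneg_right hba2 hc.le) hac
    have h1 : (a ^ 2 * c) * (b ^ 2 * c) ≤ 1 * 1 :=
      mul_le_mul hac hbc (by positivity) (by linarith)
    have hd : (a - b) * (c ^ 2 * (a ^ 2 * b ^ 2)) ≤ (a - b) * 1 := by
      apply mul_le_mul_of_nonneg_left _ (by linarith)
      linarith [h1, sq_nonneg (a*b*c)]
    have hfin : a - b ≤ a ^ 2 - b ^ 2 := by
      nlinarith [mul_nonneg (sub_nonneg.mpr hab) (by linarith : (0:ℝ) ≤ a + b - 1)]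
    nlinarith [hd, hfin]
  calc a - b ≤ _ := key
    _ = s ^ 2 / c ^ 2 * ((Real.tanh x / s) ^ 2 - (Real.tanh y / s) ^ 2) := by
        rw [div_pow, div_pow, htx, hty]
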